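/- Fix α ∈ (0,1] and suppose (Q_f^i)_{i∈[n]}, with Q_f^i : (S × Aⁿ) × A → ℝ, is a fixed point of the Q-learning update with constant learning rate α: choosing for each firm i and each state 𝐬 = (s₁,p₀) ∈ S × Aⁿ an action w_f^i(𝐬) ∈ argmax_{p∈A} Q_f^i(𝐬,p), and writing w_f(𝐬) = (w_f^1(𝐬),…,w_f^n(𝐬)), assume Q_f^i(𝐬, w_f^i(𝐬)) = (1−α) Q_f^i(𝐬, w_f^i(𝐬)) + α[π^i(w_f(𝐬), s₁) + δ_i Σ_{s₂∈S} P(s₂|w_f(𝐬),s₁) max_{a∈A} Q_f^i((s₂, w_f(𝐬)), a)] for every i and every 𝐬. Then for every i and every 𝐬 ∈ S × Aⁿ, Q_f^i(𝐬, w_f^i(𝐬)) = Ṽ₁^i(𝐬, w_f^i | w_f^{-i}), where the right-hand side is the Bellman value of the pure one-memory profile induced by w_f; i.e., the function 𝐬 ↦ Q_f^i(𝐬, w_f^i(𝐬)) is the unique solution of the Bellman system for the profile w_f. -/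

import Mathlib

open Finset

/-- A transition kernel on states. -/
def IsKernel {ι S A : Type*} [Fintype S]
    (P : (ι → A) → S → S → ℝ) : Prop :=
  (∀ p s s', 0 ≤ P p s s') ∧ ∀ p s, ∑ s', P p s s' = 1

/-- `W` solves the Bellman system of firm `i` under the pure one-memory profile `w`,
where states are pairs `(current market state, previous price profile)`. -/
def IsPureBellman {ι S A : Type*} [Fintype S]
    (P : (ι → A) → S → S → ℝ) (π : ι → (ι → A) → S → ℝ) (δ : ι → ℝ)
    (w : ι → S × (ι → A) → A) (i : ι) (W : S × (ι → A) → ℝ) : Prop :=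
  ∀ st : S × (ι → A), W st = π i (fun j => w j st) st.1 +
    δ i * ∑ s₂, P (fun j => w j st) st.1 s₂ * W (s₂, fun j => w j st)

/-- a fixed point of the `Q`-learning update with constant learning rate
`α ∈ (0,1]` captures the value of the stochastic game at time `t = 1`: the function
`𝐬 ↦ Q_f^i(𝐬, w_f^i(𝐬))` is the unique solution of the Bellman system for the pure
one-memory profile induced by `Q_f`. -/
theorem q_fixed_point_is_value_at_time_one
    {ι S A : Type*} [Fintype ι] [DecidableEq ι] [Nonempty ι]
    [Fintype S] [DecidableEq S] [Nonempty S]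
    [Fintype A] [DecidableEq A] [Nonempty A]
    (P : (ι → A) → S → S → ℝ) (hP : IsKernel P)
    (π : ι → (ι → A) → S → ℝ)
    (δ : ι → ℝ) (hδ : ∀ i, 0 < δ i ∧ δ i < 1)
    (α : ℝ) (hα0 : 0 < α) (hα1 : α ≤ 1)
    (Q : ι → S × (ι → A) → A → ℝ)
    (w : ι → S × (ι → A) → A)
    (hw : ∀ i st a, Q i st a ≤ Q i st (w i st))
    (hfix : ∀ i (st : S × (ι → A)),
      Q i st (w i st) = (1 - α) * Q i st (w i st) +
        α * (π i (fun j => w j st) st.1 +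
          δ i * ∑ s₂, P (fun j => w j st) st.1 s₂ *
            (Finset.univ.sup' Finset.univ_nonempty (Q i (s₂, fun j => w j st))))) :
    ∀ i, IsPureBellman P π δ w i (fun st => Q i st (w i st)) ∧
      (∀ W : S × (ι → A) → ℝ, IsPureBellman P π δ w i W →
        W = fun st => Q i st (w i st)) := by
  intro i
  have hsup : ∀ st : S × (ι → A),
      Finset.univ.sup' Finset.univ_nonempty (Q i st) = Q i st (w i st) := by
    intro st
    apply le_antisymm
    · exact Finset.sup'_le _ _ fun a _ => hw i st a
    · exact Finset.le_sup' _ (Finset.mem_univ _)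
  have hbell : IsPureBellman P π δ w i (fun st => Q i st (w i st)) := by
    intro st
    have h := hfix i st
    have h' : α * Q i st (w i st) =
        α * (π i (fun j => w j st) st.1 +
          δ i * ∑ s₂, P (fun j => w j st) st.1 s₂ *
            (Finset.univ.sup' Finset.univ_nonempty (Q i (s₂, fun j => w j st)))) := by
      linarith
    have h'' := mul_left_cancel₀ (ne_of_gt hα0) h'
    simp only [hsup] at h''
    simpa using h''
  refine ⟨hbell, ?_⟩
  intro W hW
  set g : S × (ι → A) → ℝ := fun st => W st - Q i st (w i st) with hg
  have hrec : ∀ st : S × (ι → A),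
      g st = δ i * ∑ s₂, P (fun j => w j st) st.1 s₂ * g (s₂, fun j => w j st) := by
    intro st
    have h1 := hW st
    have h2 := hbell st
    simp only [hg]
    simp only at h2
    rw [h1, h2]
    ring_nf
    rw [← mul_sub, ← Finset.sum_sub_distrib]
  obtain ⟨st₀, -, hmax⟩ := Finset.exists_max_image (Finset.univ : Finset (S × (ι → A)))
    (fun st => |g st|) ⟨Classical.arbitrary _, Finset.mem_univ _⟩
  have hM0 : |g st₀| = 0 := by
    by_contra hne
    have hpos : 0 < |g st₀| := lt_of_le_of_ne (abs_nonneg _) (Ne.symm hne)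
    have hb : |g st₀| ≤ δ i * |g st₀| := by
      calc |g st₀| = |δ i * ∑ s₂, P (fun j => w j st₀) st₀.1 s₂ * g (s₂, fun j => w j st₀)| := by
            rw [← hrec st₀]
        _ = δ i * |∑ s₂, P (fun j => w j st₀) st₀.1 s₂ * g (s₂, fun j => w j st₀)| := by
            rw [abs_mul, abs_of_pos (hδ i).1]
        _ ≤ δ i * ∑ s₂, P (fun j => w j st₀) st₀.1 s₂ * |g (s₂, fun j => w j st₀)| := by
            refine mul_le_mul_of_nonneg_left ?_ (le_of_lt (hδ i).1)
            refine le_trans (Finset.abs_sum_le_sum_abs _ _) ?_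
            apply Finset.sum_le_sum
            intro s₂ _
            rw [abs_mul, abs_of_nonneg (hP.1 _ _ _)]
        _ ≤ δ i * ∑ s₂, P (fun j => w j st₀) st₀.1 s₂ * |g st₀| := by
            refine mul_le_mul_of_nonneg_left ?_ (le_of_lt (hδ i).1)
            apply Finset.sum_le_sum
            intro s₂ _
            exact mul_le_mul_of_nonneg_left (hmax _ (Finset.mem_univ _)) (hP.1 _ _ _)
        _ = δ i * |g st₀| := by rw [← Finset.sum_mul, hP.2 _ _, one_mul]
    nlinarith [(hδ i).2]
  funext st
  have h1 : |g st| ≤ 0 := hM0 ▸ hmax st (Finset.mem_univ _)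
  have h2 : g st = 0 := abs_eq_zero.mp (le_antisymm h1 (abs_nonneg _))
  simpa [hg, sub_eq_zero] using h2
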